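/- Let $\mathfrak{g}$ be a finite-dimensional Lie algebra, $r \in \wedge^2 \mathfrak{g}$ a skew-symmetric tensor, and $\psi \in \wedge^3 \mathfrak{g}^*$ a 3-cocycle satisfying the twisted classical Yang-Baxter equation $\frac{1}{2}[r,r] = (\wedge^3 r^\sharp)\psi$. Then the bracket $[\alpha,\beta]_{r,\psi} = \mathrm{ad}^*_{r^\sharp\alpha}(\beta) - \mathrm{ad}^*_{r^\sharp\beta}(\alpha) + \psi(r^\sharp\alpha, r^\sharp\beta, \cdot)$ defines a Lie algebra structure on $\mathfrak{g}^*$. -/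
import Mathlib


/-- The bracket `[α,β]_{r,ψ} = ad*_{r^♯α}(β) - ad*_{r^♯β}(α) + ψ(r^♯α, r^♯β, ·)`
on the dual of a Lie algebra `g`, where `r^♯` is the map induced by `r ∈ ∧²g` and
`ψ` is a trilinear form (a 3-cochain of `g`), written here in curried form. -/
noncomputable def twBracket {g : Type*} [LieRing g] [LieAlgebra ℝ g]
    (rsharp : Module.Dual ℝ g →ₗ[ℝ] g)
    (ψ : g →ₗ[ℝ] g →ₗ[ℝ] Module.Dual ℝ g)
    (α β : Module.Dual ℝ g) : Module.Dual ℝ g :=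
  ψ (rsharp α) (rsharp β)
    - β ∘ₗ (LieAlgebra.ad ℝ g (rsharp α))
    + α ∘ₗ (LieAlgebra.ad ℝ g (rsharp β))

lemma twBracket_apply {g : Type*} [LieRing g] [LieAlgebra ℝ g]
    (rsharp : Module.Dual ℝ g →ₗ[ℝ] g)
    (ψ : g →ₗ[ℝ] g →ₗ[ℝ] Module.Dual ℝ g)
    (α β : Module.Dual ℝ g) (X : g) :
    twBracket rsharp ψ α β X
      = ψ (rsharp α) (rsharp β) X - β ⁅rsharp α, X⁆ + α ⁅rsharp β, X⁆ := by
  simp [twBracket]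

/-- if `(r, ψ)` satisfies the twisted classical Yang–Baxter equation
`½[r,r] = (∧³ r^♯)ψ` (written pointwise via a cyclic sum), with `ψ` an alternating
3-cocycle, then `[·,·]_{r,ψ}` is a Lie algebra bracket on `g*`. -/
theorem statement0 (g : Type*) [LieRing g] [LieAlgebra ℝ g] [FiniteDimensional ℝ g]
    (rsharp : Module.Dual ℝ g →ₗ[ℝ] g)
    (hskew : ∀ α β : Module.Dual ℝ g, β (rsharp α) = - α (rsharp β))
    (ψ : g →ₗ[ℝ] g →ₗ[ℝ] Module.Dual ℝ g)
    (halt1 : ∀ X Y : g, ψ X X Y = 0)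
    (halt2 : ∀ X Y : g, ψ X Y Y = 0)
    (hcocycle : ∀ X Y Z W : g,
      ψ ⁅X, Y⁆ Z W - ψ ⁅X, Z⁆ Y W + ψ ⁅X, W⁆ Y Z
        + ψ ⁅Y, Z⁆ X W - ψ ⁅Y, W⁆ X Z + ψ ⁅Z, W⁆ X Y = 0)
    (hcybe : ∀ α β γ : Module.Dual ℝ g,
      γ ⁅rsharp α, rsharp β⁆ + α ⁅rsharp β, rsharp γ⁆ + β ⁅rsharp γ, rsharp α⁆
        = - ψ (rsharp α) (rsharp β) (rsharp γ)) :
    (∀ (α β₁ β₂ : Module.Dual ℝ g),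
        twBracket rsharp ψ α (β₁ + β₂)
          = twBracket rsharp ψ α β₁ + twBracket rsharp ψ α β₂) ∧
    (∀ (c : ℝ) (α β : Module.Dual ℝ g),
        twBracket rsharp ψ α (c • β) = c • twBracket rsharp ψ α β) ∧
    (∀ (α₁ α₂ β : Module.Dual ℝ g),
        twBracket rsharp ψ (α₁ + α₂) β
          = twBracket rsharp ψ α₁ β + twBracket rsharp ψ α₂ β) ∧
    (∀ (c : ℝ) (α β : Module.Dual ℝ g),
        twBracket rsharp ψ (c • α) β = c • twBracket rsharp ψ α β) ∧
    (∀ α : Module.Dual ℝ g, twBracket rsharp ψ α α = 0) ∧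
    (∀ α β γ : Module.Dual ℝ g,
        twBracket rsharp ψ (twBracket rsharp ψ α β) γ
          + twBracket rsharp ψ (twBracket rsharp ψ β γ) α
          + twBracket rsharp ψ (twBracket rsharp ψ γ α) β = 0) := by
  -- full antisymmetry of ψ
  have h12 : ∀ X Y Z : g, ψ X Y Z = - ψ Y X Z := by
    intro X Y Z
    have h := halt1 (X + Y) Z
    simp only [map_add, LinearMap.add_apply] at h
    rw [halt1 X Z, halt1 Y Z] at h
    linarith
  have h23 : ∀ X Y Z : g, ψ X Y Z = - ψ X Z Y := by
    intro X Y Z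
    have h := halt2 X (Y + Z)
    simp only [map_add, LinearMap.add_apply] at h
    rw [halt2 X Y, halt2 X Z] at h
    linarith
  have hcyc : ∀ X Y Z : g, ψ X Y Z = ψ Z X Y := by
    intro X Y Z
    rw [h23 X Y Z, h12 X Z Y]; ring_nf
  -- key lemma: rsharp is compatible with brackets
  have key : ∀ α β : Module.Dual ℝ g,
      rsharp (twBracket rsharp ψ α β) = ⁅rsharp α, rsharp β⁆ := by
    intro α β
    rw [← sub_eq_zero, ← Module.forall_dual_apply_eq_zero_iff ℝ]
    intro γ
    rw [map_sub, sub_eq_zero, hskew (twBracket rsharp ψ α β) γ, twBracket_apply]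
    have h1 := hcybe α β γ
    have h2 := hskew α γ
    have h3 := hskew β γ
    have h4 : γ ⁅rsharp β, rsharp α⁆ = - γ ⁅rsharp α, rsharp β⁆ := by
      rw [← lie_skew, map_neg]
    have h5 : α ⁅rsharp β, rsharp γ⁆ = - α ⁅rsharp γ, rsharp β⁆ := by
      rw [← lie_skew, map_neg]
    have h6 : β ⁅rsharp α, rsharp γ⁆ = - β ⁅rsharp γ, rsharp α⁆ := by
      rw [← lie_skew, map_neg]
    linarith
  refine ⟨?_, ?_, ?_, ?_, ?_, ?_⟩
  · intro α β₁ β₂; ext X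
    simp only [twBracket_apply, map_add, add_lie, LinearMap.add_apply]
    ring
  · intro c α β; ext X
    simp only [twBracket_apply, map_smul, smul_lie, LinearMap.smul_apply, smul_eq_mul]
    ring
  · intro α₁ α₂ β; ext X
    simp only [twBracket_apply, map_add, add_lie, LinearMap.add_apply]
    ring
  · intro c α β; ext X
    simp only [twBracket_apply, map_smul, smul_lie, LinearMap.smul_apply, smul_eq_mul]
    ring
  · intro α; ext X
    simp [twBracket_apply, halt1]
  · intro α β γ
    ext X
    set a := rsharp α with ha
    set b := rsharp β with hb
    set c := rsharp γ with hc
    simp only [LinearMap.add_apply, LinearMap.zero_apply, twBracket_apply, key,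
      ← ha, ← hb, ← hc]
    -- Jacobi identities evaluated through the functionals
    have ea : α ⁅b, ⁅c, X⁆⁆ = α ⁅⁅b, c⁆, X⁆ + α ⁅c, ⁅b, X⁆⁆ := by
      rw [leibniz_lie b c X, map_add]
    have eb : β ⁅c, ⁅a, X⁆⁆ = β ⁅⁅c, a⁆, X⁆ + β ⁅a, ⁅c, X⁆⁆ := by
      rw [leibniz_lie c a X, map_add]
    have ec : γ ⁅a, ⁅b, X⁆⁆ = γ ⁅⁅a, b⁆, X⁆ + γ ⁅b, ⁅a, X⁆⁆ := by
      rw [leibniz_lie a b X, map_add]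
    have hco := hcocycle a b c X
    -- rewrite the "wrong-order" ψ terms
    have s1 : ψ ⁅c, a⁆ b X = - ψ ⁅a, c⁆ b X := by
      rw [← lie_skew a c, map_neg]; simp
    have t1 : ψ a b ⁅c, X⁆ = ψ ⁅c, X⁆ a b := by rw [hcyc]
    have t2 : ψ b c ⁅a, X⁆ = ψ ⁅a, X⁆ b c := by rw [hcyc]
    have t3 : ψ c a ⁅b, X⁆ = - ψ ⁅b, X⁆ a c := by
      rw [hcyc c a ⁅b, X⁆, h23 ⁅b, X⁆ c a, h12 ⁅b, X⁆ a c]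
    linarith
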